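/- arXiv:1212.6710 — 2 statements merged into one kernel-verified Lean document; each statement's English description precedes it below -/
import Mathlib

section
/- Let S be an n×n matrix with real entries, regarded as a complex matrix, and for a real diagonal n×n matrix M define F(M) := det(exp(−iM/2)) · det(I − exp(iM)·S). Then the complex conjugate of F(M) equals F(−M) for every real diagonal M. Consequently, if A : ℝ^b → (real diagonal n×n matrices) is a linear map, E is a fixed real diagonal n×n matrix, and the function F̃(k, α) := F(A(α) + k·E) is real-valued, then F̃(k, α) = F̃(−k, −α) for all k ∈ ℝ and α ∈ ℝ^b. -/
open scoped ComplexConjugate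

/-- The secular-type function `F(M) = det(exp(-iM/2)) · det(I - exp(iM)·S)` built from a
real matrix `S` (regarded as complex) and a real matrix `M` (intended diagonal). -/
noncomputable def secularDet {n : ℕ} (S : Matrix (Fin n) (Fin n) ℝ)
    (M : Matrix (Fin n) (Fin n) ℝ) : ℂ :=
  (NormedSpace.exp ((-(Complex.I / 2)) • M.map (Complex.ofReal))).det *
    ((1 : Matrix (Fin n) (Fin n) ℂ) -
      NormedSpace.exp (Complex.I • M.map (Complex.ofReal)) *
        S.map (Complex.ofReal)).det

lemma conj_exp_map {n : ℕ} (X : Matrix (Fin n) (Fin n) ℂ) :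
    (NormedSpace.exp X).map (starRingEnd ℂ) =
      NormedSpace.exp (X.map (starRingEnd ℂ)) := by
  have h1 : ∀ Y : Matrix (Fin n) (Fin n) ℂ,
      Y.map (starRingEnd ℂ) = (Y.conjTranspose).transpose := by
    intro Y; ext i j
    simp [Matrix.map_apply, Matrix.transpose_apply, Matrix.conjTranspose_apply]
  rw [h1, ← Matrix.exp_conjTranspose, ← Matrix.exp_transpose, ← h1]

lemma map_conj_smul_real {n : ℕ} (c : ℂ) (M : Matrix (Fin n) (Fin n) ℝ) :
    ((c • M.map (Complex.ofReal)).map (starRingEnd ℂ)) =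
      (conj c) • M.map (Complex.ofReal) := by
  ext i j
  simp [Matrix.map_apply]

lemma secularDet_conj {n : ℕ} (S M : Matrix (Fin n) (Fin n) ℝ) :
    conj (secularDet S M) = secularDet S (-M) := by
  have hSc : (S.map (Complex.ofReal)).map (starRingEnd ℂ) = S.map (Complex.ofReal) := by
    ext i j; simp [Matrix.map_apply]
  have hneg : (-M).map (Complex.ofReal) = -(M.map (Complex.ofReal)) := by
    ext i j; simp [Matrix.map_apply]
  unfold secularDet
  rw [map_mul, RingHom.map_det, RingHom.map_det, RingHom.mapMatrix_apply,
    RingHom.mapMatrix_apply, conj_exp_map, map_conj_smul_real,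
    Matrix.map_sub _ (map_sub (starRingEnd ℂ)), Matrix.map_one _ (map_zero _) (map_one _), Matrix.map_mul,
    conj_exp_map, map_conj_smul_real, hSc, hneg]
  congr 3
  · rw [map_neg, map_div₀, Complex.conj_I, Complex.conj_ofNat]
    simp [neg_div, smul_neg, neg_smul]
  · simp [smul_neg]

/-- For a real `n×n` matrix `S` and real diagonal `M`, the complex
conjugate of `F(M) := det(exp(-iM/2))·det(I - exp(iM)·S)` equals `F(-M)`. Consequently,
for a linear family `A : ℝ^b → {real diagonal matrices}` and a fixed real diagonal `E`,
if `F̃(k, α) := F(A(α) + k·E)` is real-valued then `F̃(k, α) = F̃(-k, -α)`. -/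
theorem secular_function_symmetry
    (n : ℕ) (S : Matrix (Fin n) (Fin n) ℝ) :
    (∀ M : Matrix (Fin n) (Fin n) ℝ, M.IsDiag →
        conj (secularDet S M) = secularDet S (-M)) ∧
    ∀ (b : ℕ) (A : (Fin b → ℝ) →ₗ[ℝ] Matrix (Fin n) (Fin n) ℝ),
      (∀ α, (A α).IsDiag) →
      ∀ E : Matrix (Fin n) (Fin n) ℝ, E.IsDiag →
      (∀ (k : ℝ) (α : Fin b → ℝ), (secularDet S (A α + k • E)).im = 0) →
      ∀ (k : ℝ) (α : Fin b → ℝ),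
        secularDet S (A α + k • E) = secularDet S (A (-α) + (-k) • E) := by
  refine ⟨fun M _ => secularDet_conj S M, fun b A _ E _ him k α => ?_⟩
  have hreal : conj (secularDet S (A α + k • E)) = secularDet S (A α + k • E) :=
    Complex.conj_eq_iff_im.2 (him k α)
  have h2 : -(A α + k • E) = A (-α) + (-k) • E := by
    rw [map_neg, neg_add, neg_smul]
  rw [← h2, ← secularDet_conj, hreal]
end

section
/- Let G be a finite connected simple graph containing at least one cycle and let L be a discrete Schrödinger operator on G. Then the girth of G (the length of its shortest cycle) equals the least integer k ≥ 1 for which the function A ↦ trace(L(A)^k), defined on magnetic potentials A, is not constant. -/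
/-- The magnetic Schrödinger operator `L(A)` associated to a real symmetric matrix `L`
and a magnetic potential `A`: `L(A)_{uv} = L_{uv} e^{i A(u,v)}` off the diagonal,
with unchanged diagonal. -/
noncomputable def magneticMatrix {V : Type*} [Fintype V] [DecidableEq V]
    (L : Matrix V V ℝ) (A : V → V → ℝ) : Matrix V V ℂ :=
  Matrix.of fun u v =>
    if u = v then (L u v : ℂ) else (L u v : ℂ) * Complex.exp (Complex.I * (A u v : ℂ))

open Finset SimpleGraph

namespace MagAux

set_option linter.unusedSectionVars false
set_option linter.unusedVariables false

variable {V : Type*} [Fintype V] [DecidableEq V]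


noncomputable def pp {R : Type*} [CommRing R] (M : Matrix V V R) {n : ℕ} (f : Fin (n+1) → V) : R :=
  ∏ i : Fin n, M (f i.castSucc) (f i.succ)

lemma pp_cons {R : Type*} [CommRing R] (M : Matrix V V R) {n : ℕ} (w : V) (g : Fin (n+1) → V) :
    pp M (Fin.cons w g) = M w (g 0) * pp M g := by
  unfold pp
  rw [Fin.prod_univ_succ]
  have h1 : ∀ i : Fin n, (Fin.cons w g : Fin (n+2) → V) i.succ.castSucc = g i.castSucc := by
    intro i; rw [← Fin.succ_castSucc]; simp
  simp [h1]

lemma pow_apply {R : Type*} [CommRing R] (M : Matrix V V R) (n : ℕ) (u v : V) :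
    (M ^ n) u v = ∑ f : Fin (n+1) → V,
      (if f 0 = u ∧ f (Fin.last n) = v then pp M f else 0) := by
  induction n generalizing u v with
  | zero =>
    rw [pow_zero]
    rw [← Fintype.sum_equiv (Equiv.funUnique (Fin 1) V).symm
      (fun w => if w = u ∧ w = v then (1 : R) else 0)
      (fun f : Fin 1 → V => if f 0 = u ∧ f (Fin.last 0) = v then pp M f else 0)
      (fun w => by simp [pp, Equiv.funUnique, Fin.last])]
    by_cases h : u = v
    · subst h; simp [Matrix.one_apply]
    · rw [Matrix.one_apply_ne h, Finset.sum_eq_zero]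
      intro w _
      rw [if_neg]
      rintro ⟨rfl, rfl⟩; exact h rfl
  | succ n ih =>
    rw [pow_succ', Matrix.mul_apply]
    rw [← Fintype.sum_equiv (Fin.consEquiv (fun _ : Fin (n+2) => V))
      (fun p : V × (Fin (n+1) → V) =>
        if p.1 = u ∧ p.2 (Fin.last n) = v then M p.1 (p.2 0) * pp M p.2 else 0)
      (fun f : Fin (n+2) → V => if f 0 = u ∧ f (Fin.last (n+1)) = v then pp M f else 0)
      (fun p => by
        obtain ⟨w, g⟩ := p
        have hce : ((Fin.consEquiv fun _ : Fin (n+2) => V) (w, g)) = Fin.cons w g := rfl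
        simp only [hce]
        rw [pp_cons,
          show (Fin.cons w g : Fin (n+2) → V) (Fin.last (n+1)) = g (Fin.last n) from by
            rw [← Fin.succ_last, Fin.cons_succ],
          Fin.cons_zero])]
    rw [Fintype.sum_prod_type]
    have hw : ∀ w, M u w * (M ^ n) w v
        = ∑ g : Fin (n+1) → V, (if g 0 = w ∧ g (Fin.last n) = v then M u w * pp M g else 0) := by
      intro w
      rw [ih, Finset.mul_sum]
      exact Finset.sum_congr rfl fun g _ => by rw [mul_ite, mul_zero]
    show (∑ w : V, M u w * (M ^ n) w v) = ∑ w : V, ∑ g : Fin (n+1) → V,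
          (if w = u ∧ g (Fin.last n) = v then M w (g 0) * pp M g else 0)
    symm
    calc ∑ w : V, ∑ g : Fin (n+1) → V,
          (if w = u ∧ g (Fin.last n) = v then M w (g 0) * pp M g else 0)
        = ∑ g : Fin (n+1) → V, (if g (Fin.last n) = v then M u (g 0) * pp M g else 0) := by
          rw [Finset.sum_comm]
          refine Finset.sum_congr rfl fun g _ => ?_
          by_cases hg : g (Fin.last n) = v
          · simp [hg]
          · simp [hg]
      _ = ∑ w : V, M u w * (M ^ n) w v := by
          simp only [hw]
          rw [Finset.sum_comm]
          refine Finset.sum_congr rfl fun g _ => ?_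
          by_cases hg : g (Fin.last n) = v
          · simp [hg]
          · simp [hg]

lemma trace_pow {R : Type*} [CommRing R] (M : Matrix V V R) (n : ℕ) :
    (M ^ (n+1)).trace = ∑ f : Fin (n+2) → V,
      (if f 0 = f (Fin.last (n+1)) then pp M f else 0) := by
  rw [Matrix.trace]
  simp only [Matrix.diag, pow_apply]
  rw [Finset.sum_comm]
  refine Finset.sum_congr rfl fun f _ => ?_
  by_cases hf : f 0 = f (Fin.last (n+1))
  · rw [if_pos hf]
    rw [Finset.sum_eq_single (f 0)]
    · rw [if_pos ⟨rfl, hf.symm⟩]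
    · intro w _ hne
      rw [if_neg]; rintro ⟨h1, -⟩; exact hne h1.symm
    · intro h; exact absurd (Finset.mem_univ _) h
  · rw [if_neg hf, Finset.sum_eq_zero]
    intro w _
    rw [if_neg]; rintro ⟨rfl, h2⟩; exact hf h2.symm


def mkWalk (G : SimpleGraph V) (f : ℕ → V) :
    ∀ (n : ℕ), (∀ i < n, G.Adj (f i) (f (i+1))) → G.Walk (f 0) (f n)
  | 0, _ => SimpleGraph.Walk.nil
  | (n+1), h => (mkWalk G f n (fun i hi => h i (by omega))).concat (h n (by omega))

lemma mkWalk_length (G : SimpleGraph V) (f : ℕ → V) (n : ℕ) (h) :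
    (mkWalk G f n h).length = n := by
  induction n with
  | zero => rfl
  | succ n ih => rw [mkWalk, Walk.length_concat, ih]

lemma mkWalk_support (G : SimpleGraph V) (f : ℕ → V) (n : ℕ) (h) :
    (mkWalk G f n h).support = (List.range (n+1)).map f := by
  induction n with
  | zero => rfl
  | succ n ih =>
    rw [mkWalk, Walk.support_concat, ih, List.range_succ (n := n+1), List.map_append]
    simp [List.concat_eq_append]

lemma mkWalk_edges (G : SimpleGraph V) (f : ℕ → V) (n : ℕ) (h) :
    (mkWalk G f n h).edges = (List.range n).map (fun i => s(f i, f (i+1))) := by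
  induction n with
  | zero => rfl
  | succ n ih =>
    rw [mkWalk, Walk.edges_concat, ih, List.range_succ (n := n), List.map_append]
    simp [List.concat_eq_append]

lemma girth_le_of_seq (G : SimpleGraph V) (f : ℕ → V) (k : ℕ) (h3 : 3 ≤ k)
    (hadj : ∀ i < k, G.Adj (f i) (f (i+1))) (hclosed : f k = f 0)
    (hinj : ∀ i j, i < j → j ≤ k → f i = f j → i = 0 ∧ j = k) :
    G.girth ≤ k := by
  have inj0 : ∀ i j, i < k → j < k → f i = f j → i = j := by
    intro i j hi hj hf
    rcases lt_trichotomy i j with h | h | h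
    · exact absurd (hinj i j h (by omega) hf).2 (by omega)
    · exact h
    · exact absurd (hinj j i h (by omega) hf.symm).2 (by omega)
  set w : G.Walk (f 0) (f 0) := (mkWalk G f k hadj).copy rfl hclosed with hw
  have hlen : w.length = k := by rw [hw, Walk.length_copy, mkWalk_length]
  have hcyc : w.IsCycle := by
    rw [Walk.isCycle_def]
    refine ⟨?_, ?_, ?_⟩
    · -- IsTrail
      rw [Walk.isTrail_def, hw, Walk.edges_copy, mkWalk_edges]
      refine List.Nodup.map_on ?_ List.nodup_range
      intro i hi j hj hij
      simp only [List.mem_range] at hi hj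
      rw [Sym2.eq_iff] at hij
      -- wlog-free case bash
      rcases hij with ⟨h1, h2⟩ | ⟨h1, h2⟩
      · exact inj0 i j hi hj h1
      · -- f i = f (j+1), f (i+1) = f j
        by_cases hj1 : j + 1 = k
        · have hi0 : i = 0 := by
            apply inj0 i 0 hi (by omega)
            rw [h1, hj1, hclosed]
          have : 1 = j := by
            apply inj0 1 j (by omega) hj
            rw [← h2, hi0]
          omega
        · have : i = j + 1 := inj0 i (j+1) hi (by omega) h1
          by_cases hik : i + 1 = k
          · have : 0 = j := by
              apply inj0 0 j (by omega) hj
              rw [← hclosed, ← hik, h2]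
            omega
          · have : i + 1 = j := inj0 (i+1) j (by omega) hj h2
            omega
    · -- ≠ nil
      intro hnil
      rw [hnil] at hlen
      simp at hlen
      omega
    · -- support tail nodup
      rw [hw, Walk.support_copy, mkWalk_support, List.range_succ_eq_map, List.map_cons,
        List.tail_cons, List.map_map]
      refine List.Nodup.map_on ?_ List.nodup_range
      intro i hi j hj hij
      simp only [List.mem_range] at hi hj
      simp only [Function.comp_apply] at hij
      have : ∀ a b, a < k → b < k → f (a+1) = f (b+1) → a+1 = b+1 := by
        intro a b ha hb hf
        by_cases hak : a + 1 = k
        · by_cases hbk : b + 1 = k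
          · omega
          · have := inj0 0 (b+1) (by omega) (by omega) (by rw [← hclosed, ← hak, hf]); omega
        · by_cases hbk : b + 1 = k
          · have := inj0 (a+1) 0 (by omega) (by omega) (by rw [hf, hbk, hclosed]); omega
          · have := inj0 (a+1) (b+1) (by omega) (by omega) hf; omega
      have := this i j hi hj hij
      omega
  have hle : G.egirth ≤ (k : ℕ∞) := by
    calc G.egirth ≤ (w.length : ℕ∞) := by
          rw [egirth]
          exact iInf_le_of_le (f 0) (iInf_le_of_le w (iInf_le _ hcyc))
      _ = (k : ℕ∞) := by rw [hlen]
  calc G.girth = G.egirth.toNat := rfl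
    _ ≤ (k : ℕ∞).toNat := ENat.toNat_le_toNat hle (by simp)
    _ = k := by simp


lemma seq_split {M : Type*} [AddCommMonoid M] (ψ : V → V → M) (f : ℕ → V) {i j k : ℕ}
    (hij : i < j) (hjk : j ≤ k) (hf : f i = f j) :
    ∑ m ∈ range k, ψ (f m) (f (m+1)) =
      (∑ m ∈ range (j-i), ψ (f (i+m)) (f (i+m+1)))
      + ∑ m ∈ range (k-(j-i)),
          ψ ((fun m => if m ≤ i then f m else f (m+(j-i))) m)
            ((fun m => if m ≤ i then f m else f (m+(j-i))) (m+1)) := by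
  have key : ∀ m, i ≤ m → (if m ≤ i then f m else f (m+(j-i))) = f (m+(j-i)) := by
    intro m hm
    by_cases hmi : m ≤ i
    · have : m = i := by omega
      subst this
      rw [if_pos hmi, hf]
      exact congrArg f (by omega)
    · rw [if_neg hmi]
  have h1 : (∑ m ∈ range (j-i), ψ (f (i+m)) (f (i+m+1)))
      = ∑ m ∈ Finset.Ico i j, ψ (f m) (f (m+1)) := by
    rw [Finset.sum_Ico_eq_sum_range]
  have h2 : (∑ m ∈ range (k-(j-i)),
        ψ ((fun m => if m ≤ i then f m else f (m+(j-i))) m)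
          ((fun m => if m ≤ i then f m else f (m+(j-i))) (m+1)))
      = (∑ m ∈ Finset.Ico 0 i, ψ (f m) (f (m+1)))
        + ∑ m ∈ Finset.Ico j k, ψ (f m) (f (m+1)) := by
    have hik : i ≤ k - (j-i) := by omega
    rw [← Nat.Ico_zero_eq_range, ← Finset.sum_Ico_consecutive _ (Nat.zero_le i) hik]
    congr 1
    · refine Finset.sum_congr rfl fun m hm => ?_
      simp only [Finset.mem_Ico] at hm
      simp only []
      rw [if_pos (by omega), if_pos (by omega)]
    · rw [Finset.sum_Ico_eq_sum_range, Finset.sum_Ico_eq_sum_range]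
      refine Finset.sum_congr (by congr 1; omega) fun m hm => ?_
      simp only [Finset.mem_range] at hm
      simp only []
      rw [key (i+m) (by omega), key (i+m+1) (by omega)]
      exact congrArg₂ ψ (congrArg f (by omega)) (congrArg f (by omega))
  rw [h1, h2]
  rw [← Nat.Ico_zero_eq_range]
  rw [← Finset.sum_Ico_consecutive (fun m => ψ (f m) (f (m+1))) (Nat.zero_le i) (le_of_lt (lt_of_lt_of_le hij hjk))]
  rw [← Finset.sum_Ico_consecutive (fun m => ψ (f m) (f (m+1))) (le_of_lt hij) hjk]
  abel


/-- The number of non-stationary steps, as a sum of indicators. -/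
def ecount (f : ℕ → V) [DecidableEq V] (k : ℕ) : ℕ :=
  ∑ m ∈ range k, (if f (m+1) = f m then 0 else 1)

lemma balance (G : SimpleGraph V) [DecidableEq V] {M : Type*} [AddCommGroup M]
    (φ : V → V → M) (hφ : ∀ u v, φ u v = - φ v u) (hd : ∀ u, φ u u = 0) :
    ∀ k : ℕ, ∀ f : ℕ → V, f k = f 0 →
    (∀ i < k, f (i+1) = f i ∨ G.Adj (f i) (f (i+1))) →
    ecount f k < G.girth →
    ∑ i ∈ range k, φ (f i) (f (i+1)) = 0 := by
  intro k
  induction k using Nat.strong_induction_on with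
  | _ k ih =>
  intro f hcl hsteps hcard
  match k, ih, hcl, hsteps, hcard with
  | 0, ih, hcl, hsteps, hcard => simp
  | 1, ih, hcl, hsteps, hcard =>
    rw [Finset.sum_range_one, hcl, hd]
  | 2, ih, hcl, hsteps, hcard =>
    rw [Finset.sum_range_succ, Finset.sum_range_one, hcl, hφ (f 0) (f 1)]
    exact neg_add_cancel _
  | (n+3), ih, hcl, hsteps, hcard =>
    set k := n + 3 with hk
    by_cases hex : ∃ p : ℕ × ℕ, p.1 < p.2 ∧ p.2 ≤ k ∧ f p.1 = f p.2 ∧ ¬(p.1 = 0 ∧ p.2 = k)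
    · obtain ⟨⟨i, j⟩, hij, hjk, hfij, hne⟩ := hex
      simp only [] at hij hjk hfij hne
      set d := j - i with hdd
      set g₁ : ℕ → V := fun m => f (i+m) with hg₁
      set g₂ : ℕ → V := fun m => if m ≤ i then f m else f (m+d) with hg₂
      have hd1 : 1 ≤ d := by omega
      have hdk : d < k := by
        rcases Nat.lt_or_ge i 1 with h | h
        · have : i = 0 := by omega
          subst this
          have : j ≠ k := fun h => hne ⟨rfl, h⟩
          omega
        · omega
      have hg₂hi : ∀ m, i ≤ m → g₂ m = f (m+d) := by
        intro m hm
        rw [hg₂]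
        by_cases hmi : m ≤ i
        · have : m = i := by omega
          subst this
          simp only [if_pos hmi]
          rw [hfij]
          exact congrArg f (by omega)
        · simp only [if_neg hmi]
      have hg₂lo : ∀ m, m ≤ i → g₂ m = f m := by
        intro m hm; rw [hg₂]; simp only [if_pos hm]
      -- closures
      have hcl1 : g₁ d = g₁ 0 := by
        rw [hg₁]
        simp only []
        rw [show i + d = j by omega, ← hfij]
        exact congrArg f (by omega)
      have hcl2 : g₂ (k-d) = g₂ 0 := by
        rw [hg₂hi (k-d) (by omega), hg₂lo 0 (by omega)]
        rw [show k - d + d = k by omega, hcl]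
      -- steps
      have hst1 : ∀ m < d, g₁ (m+1) = g₁ m ∨ G.Adj (g₁ m) (g₁ (m+1)) := by
        intro m hm
        have h1 : g₁ (m+1) = f (i+m+1) := congrArg f (by omega)
        have h2 : g₁ m = f (i+m) := rfl
        rw [h1, h2]
        exact hsteps (i+m) (by omega)
      have hst2 : ∀ m < k - d, g₂ (m+1) = g₂ m ∨ G.Adj (g₂ m) (g₂ (m+1)) := by
        intro m hm
        by_cases hmi : m + 1 ≤ i
        · rw [hg₂lo (m+1) hmi, hg₂lo m (by omega)]
          exact hsteps m (by omega)
        · rcases Nat.lt_or_ge m i with h | h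
          · -- m < i but m+1 > i: impossible unless m+1 = i+... m+1 > i and m < i gives m+1 = i+? contradiction m+1 ≤ i fails only if m ≥ i
            omega
          · rw [hg₂hi (m+1) (by omega), hg₂hi m h]
            have h1 : f (m+1+d) = f (m+d+1) := congrArg f (by omega)
            rw [h1]
            exact hsteps (m+d) (by omega)
      -- counts
      have hcsplit := seq_split (fun u v : V => if v = u then (0:ℕ) else 1) f hij hjk hfij
      have hS1 : ecount g₁ d = ∑ m ∈ range d, (fun u v : V => if v = u then (0:ℕ) else 1) (f (i+m)) (f (i+m+1)) := by
        unfold ecount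
        refine Finset.sum_congr rfl fun m _ => ?_
        have h1 : g₁ (m+1) = f (i+m+1) := congrArg f (by omega)
        have h2 : g₁ m = f (i+m) := rfl
        rw [h1, h2]
      have hS2 : ecount g₂ (k-d) = ∑ m ∈ range (k-d),
          (fun u v : V => if v = u then (0:ℕ) else 1)
            ((fun m => if m ≤ i then f m else f (m+(j-i))) m)
            ((fun m => if m ≤ i then f m else f (m+(j-i))) (m+1)) := by
        unfold ecount
        rfl
      have hctot : ecount f k = ecount g₁ d + ecount g₂ (k-d) := by
        rw [hS1, hS2]
        exact hcsplit
      have hc1 : ecount g₁ d < G.girth := by omega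
      have hc2 : ecount g₂ (k-d) < G.girth := by omega
      -- sums
      have z1 := ih d hdk g₁ hcl1 hst1 hc1
      have z2 := ih (k-d) (by omega) g₂ hcl2 hst2 hc2
      have hφsplit := seq_split φ f hij hjk hfij
      rw [hφsplit]
      have e1 : ∑ m ∈ range d, φ (f (i+m)) (f (i+m+1)) = ∑ m ∈ range d, φ (g₁ m) (g₁ (m+1)) := by
        refine Finset.sum_congr rfl fun m _ => ?_
        have h1 : g₁ (m+1) = f (i+m+1) := congrArg f (by omega)
        have h2 : g₁ m = f (i+m) := rfl
        rw [h1, h2]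
      have e2 : ∑ m ∈ range (k-d),
          φ ((fun m => if m ≤ i then f m else f (m+(j-i))) m)
            ((fun m => if m ≤ i then f m else f (m+(j-i))) (m+1))
          = ∑ m ∈ range (k-d), φ (g₂ m) (g₂ (m+1)) := rfl
      rw [e1, e2, z1, z2, add_zero]
    · push_neg at hex
      have hinj : ∀ a b, a < b → b ≤ k → f a = f b → a = 0 ∧ b = k :=
        fun a b h1 h2 h3 => hex (a, b) h1 h2 h3
      have nostat : ∀ m, m < k → f (m+1) ≠ f m := by
        intro m hm heq
        have := hinj m (m+1) (by omega) (by omega) heq.symm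
        omega
      have hadj : ∀ m, m < k → G.Adj (f m) (f (m+1)) := by
        intro m hm
        exact (hsteps m hm).resolve_left (nostat m hm)
      have hgle : G.girth ≤ k := girth_le_of_seq G f k (by omega) hadj hcl hinj
      have hecount : ecount f k = k := by
        unfold ecount
        rw [Finset.sum_congr rfl (fun m hm => if_neg (nostat m (Finset.mem_range.mp hm)))]
        simp
      rw [hecount] at hcard
      exact absurd hcard (not_lt.mpr hgle)

def extSeq {n : ℕ} (f : Fin (n+1) → V) : ℕ → V :=
  fun m => if h : m < n+1 then f ⟨m, h⟩ else f 0

lemma extSeq_castSucc {n : ℕ} (f : Fin (n+1) → V) (i : Fin n) :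
    extSeq f i.val = f i.castSucc := by
  unfold extSeq
  rw [dif_pos (Nat.lt_succ_of_lt i.isLt)]
  exact congrArg f (Fin.ext (by simp))

lemma extSeq_succ {n : ℕ} (f : Fin (n+1) → V) (i : Fin n) :
    extSeq f (i.val + 1) = f i.succ := by
  unfold extSeq
  rw [dif_pos (Nat.succ_lt_succ i.isLt)]
  exact congrArg f (Fin.ext (by simp))

lemma extSeq_zero {n : ℕ} (f : Fin (n+1) → V) : extSeq f 0 = f 0 := by
  unfold extSeq
  rw [dif_pos (Nat.succ_pos n)]
  exact congrArg f (Fin.ext (by simp))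

lemma extSeq_last {n : ℕ} (f : Fin (n+1) → V) : extSeq f n = f (Fin.last n) := by
  unfold extSeq
  rw [dif_pos (Nat.lt_succ_self n)]
  exact congrArg f (Fin.ext (by simp))

lemma sum_steps_eq {M : Type*} [AddCommMonoid M] (ψ : V → V → M) {n : ℕ} (f : Fin (n+1) → V) :
    ∑ m ∈ range n, ψ (extSeq f m) (extSeq f (m+1)) = ∑ i : Fin n, ψ (f i.castSucc) (f i.succ) := by
  rw [← Fin.sum_univ_eq_sum_range (fun m => ψ (extSeq f m) (extSeq f (m+1))) n]
  exact Fintype.sum_congr _ _ fun i => by rw [extSeq_castSucc, extSeq_succ]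

lemma extSeq_steps {n : ℕ} (f : Fin (n+1) → V) (G : SimpleGraph V)
    (hall : ∀ i : Fin n, f i.succ = f i.castSucc ∨ G.Adj (f i.castSucc) (f i.succ)) :
    ∀ m < n, extSeq f (m+1) = extSeq f m ∨ G.Adj (extSeq f m) (extSeq f (m+1)) := by
  intro m hm
  have h1 : extSeq f ((⟨m, hm⟩ : Fin n).val + 1) = f (⟨m, hm⟩ : Fin n).succ := extSeq_succ f _
  have h2 : extSeq f ((⟨m, hm⟩ : Fin n).val) = f (⟨m, hm⟩ : Fin n).castSucc := extSeq_castSucc f _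
  simp only [] at h1 h2
  rw [h1, h2]
  exact hall _


lemma ecount_le [DecidableEq V] (f : ℕ → V) (k : ℕ) : ecount f k ≤ k := by
  unfold ecount
  calc ∑ m ∈ range k, (if f (m+1) = f m then 0 else 1)
      ≤ ∑ m ∈ range k, 1 := Finset.sum_le_sum (fun m _ => by split <;> omega)
    _ = k := by simp

lemma ecount_lt [DecidableEq V] (f : ℕ → V) (k : ℕ) {i₀ : ℕ} (hi₀ : i₀ < k)
    (hstat : f (i₀+1) = f i₀) : ecount f k < k := by
  unfold ecount
  have h1 : ∑ m ∈ range k, (if f (m+1) = f m then (0:ℕ) else 1)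
      = ∑ m ∈ (range k).erase i₀, (if f (m+1) = f m then 0 else 1)
        + (if f (i₀+1) = f i₀ then 0 else 1) :=
    (Finset.sum_erase_add _ _ (Finset.mem_range.mpr hi₀)).symm
  rw [h1, if_pos hstat, add_zero]
  calc ∑ m ∈ (range k).erase i₀, (if f (m+1) = f m then (0:ℕ) else 1)
      ≤ ∑ m ∈ (range k).erase i₀, 1 := Finset.sum_le_sum (fun m _ => by split <;> omega)
    _ = (range k).card - 1 := by
        rw [Finset.sum_const, smul_eq_mul, mul_one,
          Finset.card_erase_of_mem (Finset.mem_range.mpr hi₀)]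
    _ < k := by rw [Finset.card_range]; omega

lemma balance_fin (G : SimpleGraph V) [DecidableEq V] {M : Type*} [AddCommGroup M]
    (φ : V → V → M) (hφ : ∀ u v, φ u v = - φ v u) (hd : ∀ u, φ u u = 0) {n : ℕ}
    (f : Fin (n+1) → V) (hcl : f 0 = f (Fin.last n))
    (hall : ∀ i : Fin n, f i.succ = f i.castSucc ∨ G.Adj (f i.castSucc) (f i.succ))
    (hcount : ecount (extSeq f) n < G.girth) :
    ∑ i : Fin n, φ (f i.castSucc) (f i.succ) = 0 := by
  rw [← sum_steps_eq]
  exact balance G φ hφ hd n (extSeq f)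
    (by rw [extSeq_last, extSeq_zero, hcl]) (extSeq_steps f G hall) hcount


lemma mag_apply (L : Matrix V V ℝ) (A : V → V → ℝ) (hA : ∀ u v, A u v = - A v u) (u v : V) :
    magneticMatrix L A u v = (L u v : ℂ) * Complex.exp (Complex.I * (A u v : ℂ)) := by
  unfold magneticMatrix
  rw [Matrix.of_apply]
  split
  · rename_i h
    subst h
    have h0 : A u u = 0 := by have := hA u u; linarith
    rw [h0]
    simp
  · rfl

lemma pp_mag (L : Matrix V V ℝ) (A : V → V → ℝ) (hA : ∀ u v, A u v = - A v u)
    {n : ℕ} (f : Fin (n+1) → V) :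
    pp (magneticMatrix L A) f
      = ((pp L f : ℝ) : ℂ)
        * Complex.exp (Complex.I * ((∑ i : Fin n, A (f i.castSucc) (f i.succ) : ℝ) : ℂ)) := by
  unfold pp
  rw [Finset.prod_congr rfl (fun i _ => mag_apply L A hA (f i.castSucc) (f i.succ)),
    Finset.prod_mul_distrib, ← Complex.exp_sum, ← Finset.mul_sum]
  rw [Complex.ofReal_prod, Complex.ofReal_sum]

lemma exp_I_pi : Complex.exp (Complex.I * (Real.pi : ℂ)) = -1 := by
  rw [mul_comm]; exact Complex.exp_pi_mul_I

lemma exp_I_neg_pi : Complex.exp (Complex.I * ((-Real.pi : ℝ) : ℂ)) = -1 := by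
  push_cast
  rw [mul_comm, neg_mul, Complex.exp_neg, Complex.exp_pi_mul_I]
  norm_num


/-- Part 1 per-sequence lemma. -/
lemma pp_mag_eq_of_short (G : SimpleGraph V) (L : Matrix V V ℝ)
    (hzero : ∀ u v, u ≠ v → ¬ G.Adj u v → L u v = 0)
    (A : V → V → ℝ) (hA : ∀ u v, A u v = - A v u) {n : ℕ} (f : Fin (n+1) → V)
    (hcl : f 0 = f (Fin.last n)) (hlt : n < G.girth) :
    pp (magneticMatrix L A) f = ((pp L f : ℝ) : ℂ) := by
  by_cases hall : ∀ i : Fin n, f i.succ = f i.castSucc ∨ G.Adj (f i.castSucc) (f i.succ)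
  · rw [pp_mag L A hA f]
    have hz : ∑ i : Fin n, A (f i.castSucc) (f i.succ) = 0 := by
      refine balance_fin G A hA (fun u => by have := hA u u; linarith) f hcl hall ?_
      exact lt_of_le_of_lt (ecount_le _ _) hlt
    rw [hz]
    simp
  · push_neg at hall
    obtain ⟨i, hne, hnadj⟩ := hall
    have hLz : L (f i.castSucc) (f i.succ) = 0 := hzero _ _ (fun h => hne h.symm) hnadj
    have h1 : pp L f = 0 := by
      unfold pp
      exact Finset.prod_eq_zero (Finset.mem_univ i) hLz
    have h2 : pp (magneticMatrix L A) f = 0 := by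
      unfold pp
      refine Finset.prod_eq_zero (Finset.mem_univ i) ?_
      unfold magneticMatrix
      rw [Matrix.of_apply, if_neg (fun h => hne h.symm), hLz]
      simp
    rw [h1, h2]
    simp

/-- Part 1: the trace is A-independent for exponents below the girth. -/
lemma trace_mag_eq_of_short (G : SimpleGraph V) (L : Matrix V V ℝ)
    (hzero : ∀ u v, u ≠ v → ¬ G.Adj u v → L u v = 0)
    (A : V → V → ℝ) (hA : ∀ u v, A u v = - A v u) {n : ℕ} (hlt : n + 1 < G.girth) :
    ((magneticMatrix L A) ^ (n+1)).trace
      = ((∑ f : Fin (n+2) → V, (if f 0 = f (Fin.last (n+1)) then pp L f else 0) : ℝ) : ℂ) := by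
  rw [trace_pow, Complex.ofReal_sum]
  refine Finset.sum_congr rfl fun f _ => ?_
  by_cases hcl : f 0 = f (Fin.last (n+1))
  · rw [if_pos hcl, if_pos hcl]
    exact pp_mag_eq_of_short G L hzero A hA f hcl hlt
  · rw [if_neg hcl, if_neg hcl]
    simp


def phiZ (x y : V) : V → V → ℤ := fun u v =>
  if u = x ∧ v = y then 1 else if u = y ∧ v = x then -1 else 0

noncomputable def Axy (x y : V) : V → V → ℝ := fun u v =>
  if u = x ∧ v = y then Real.pi else if u = y ∧ v = x then -Real.pi else 0

noncomputable def Lxy (L : Matrix V V ℝ) (x y : V) : Matrix V V ℝ :=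
  Matrix.of fun u v => if (u = x ∧ v = y) ∨ (u = y ∧ v = x) then -L u v else L u v

variable {x y : V}

lemma phiZ_antisym (hxy : x ≠ y) : ∀ u v, phiZ x y u v = - phiZ x y v u := by
  intro u v
  unfold phiZ
  by_cases h1 : u = x ∧ v = y
  · rw [if_pos h1, if_neg (by rintro ⟨rfl, rfl⟩; exact hxy h1.2), if_pos ⟨h1.2, h1.1⟩]
    norm_num
  · by_cases h2 : u = y ∧ v = x
    · rw [if_neg h1, if_pos h2, if_pos ⟨h2.2, h2.1⟩]
    · rw [if_neg h1, if_neg h2, if_neg (fun h => h2 ⟨h.2, h.1⟩), if_neg (fun h => h1 ⟨h.2, h.1⟩)]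
      norm_num

lemma phiZ_diag (hxy : x ≠ y) : ∀ u, phiZ x y u u = 0 := by
  intro u
  unfold phiZ
  rw [if_neg (by rintro ⟨rfl, rfl⟩; exact hxy rfl), if_neg (by rintro ⟨rfl, rfl⟩; exact hxy rfl)]

lemma Axy_antisym (hxy : x ≠ y) : ∀ u v, Axy x y u v = - Axy x y v u := by
  intro u v
  unfold Axy
  by_cases h1 : u = x ∧ v = y
  · rw [if_pos h1, if_neg (by rintro ⟨rfl, rfl⟩; exact hxy h1.2), if_pos ⟨h1.2, h1.1⟩]
    norm_num
  · by_cases h2 : u = y ∧ v = x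
    · rw [if_neg h1, if_pos h2, if_pos ⟨h2.2, h2.1⟩]
    · rw [if_neg h1, if_neg h2, if_neg (fun h => h2 ⟨h.2, h.1⟩), if_neg (fun h => h1 ⟨h.2, h.1⟩)]
      norm_num

lemma mag_Axy (L : Matrix V V ℝ) (hxy : x ≠ y) :
    magneticMatrix L (Axy x y) = Matrix.of fun u v => ((Lxy L x y u v : ℝ) : ℂ) := by
  ext u v
  unfold magneticMatrix Lxy Axy
  simp only [Matrix.of_apply]
  by_cases huv : u = v
  · subst huv
    rw [if_pos rfl,
      if_neg (by rintro (⟨rfl, rfl⟩ | ⟨rfl, rfl⟩) <;> exact hxy rfl)]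
  · rw [if_neg huv]
    by_cases h1 : u = x ∧ v = y
    · rw [if_pos h1, if_pos (Or.inl h1), exp_I_pi]
      push_cast
      ring
    · by_cases h2 : u = y ∧ v = x
      · rw [if_neg h1, if_pos h2, if_pos (Or.inr h2), exp_I_neg_pi]
        push_cast
        ring
      · rw [if_neg h1, if_neg h2, if_neg (by tauto)]
        simp

lemma prod_zpow_neg_one {ι : Type*} (s : Finset ι) (z : ι → ℤ) :
    ∏ i ∈ s, ((-1:ℝ) ^ (z i)) = (-1:ℝ) ^ (∑ i ∈ s, z i) := by
  induction s using Finset.cons_induction with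
  | empty => simp
  | cons a s ha ih =>
    rw [Finset.prod_cons, Finset.sum_cons, ih, ← zpow_add₀ (by norm_num : (-1:ℝ) ≠ 0)]

lemma Lxy_apply (L : Matrix V V ℝ) (hxy : x ≠ y) (u v : V) :
    Lxy L x y u v = ((-1:ℝ) ^ (phiZ x y u v)) * L u v := by
  unfold Lxy phiZ
  rw [Matrix.of_apply]
  by_cases h1 : u = x ∧ v = y
  · rw [if_pos (Or.inl h1), if_pos h1]
    norm_num
  · by_cases h2 : u = y ∧ v = x
    · rw [if_pos (Or.inr h2), if_neg h1, if_pos h2]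
      norm_num
    · rw [if_neg (by tauto), if_neg h1, if_neg h2]
      norm_num

lemma pp_Lxy (L : Matrix V V ℝ) (hxy : x ≠ y) {n : ℕ} (f : Fin (n+1) → V) :
    pp (Lxy L x y) f
      = ((-1:ℝ) ^ (∑ i : Fin n, phiZ x y (f i.castSucc) (f i.succ))) * pp L f := by
  unfold pp
  rw [Finset.prod_congr rfl (fun i _ => Lxy_apply L hxy (f i.castSucc) (f i.succ)),
    Finset.prod_mul_distrib, prod_zpow_neg_one]


lemma getVert_support_getD {G : SimpleGraph V} {u v : V} (p : G.Walk u v) (z : V) :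
    ∀ n, n ≤ p.length → p.getVert n = p.support.getD n z := by
  induction p with
  | nil =>
    intro n hn
    simp only [Walk.length_nil, Nat.le_zero] at hn
    subst hn
    rfl
  | cons h q ihq =>
    intro n hn
    match n with
    | 0 => rfl
    | (m+1) =>
      rw [Walk.getVert_cons_succ, Walk.support_cons, List.getD_cons_succ]
      exact ihq m (by simpa [Walk.length_cons] using hn)

section CycleFacts

variable [DecidableEq V] {G : SimpleGraph V} {a : V} (w : G.Walk a a)

lemma cycle_getVert_ne (hw : w.IsCycle) :
    (∀ i, 1 ≤ i → i < w.length → w.getVert i ≠ a)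
    ∧ w.getVert (w.length - 1) ≠ w.getVert 1 := by
  have hg3 : 3 ≤ w.length := hw.three_le_length
  have tnd : w.support.tail.Nodup := (w.isCycle_def.mp hw).2.2
  have tlen : w.support.tail.length = w.length := by
    rw [List.length_tail, Walk.length_support]
    omega
  have hgetD : ∀ i, 1 ≤ i → i ≤ w.length → w.getVert i = w.support.tail.getD (i-1) a := by
    intro i h1 h2
    rw [getVert_support_getD w a i h2]
    obtain ⟨m, rfl⟩ : ∃ m, i = m + 1 := ⟨i - 1, by omega⟩
    conv_lhs => rw [Walk.support_eq_cons]
    rw [List.getD_cons_succ]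
    simp
  have hinjt : ∀ p q, p < w.length → q < w.length →
      w.support.tail.getD p a = w.support.tail.getD q a → p = q := by
    intro p q hp hq he
    rw [List.getD_eq_getElem _ _ (by omega), List.getD_eq_getElem _ _ (by omega)] at he
    exact (tnd.getElem_inj_iff).mp he
  have hlast : w.getVert w.length = a := w.getVert_length
  constructor
  · intro i h1 h2 he
    have e1 : w.support.tail.getD (i-1) a = w.support.tail.getD (w.length - 1) a := by
      rw [← hgetD i h1 (by omega), ← hgetD w.length (by omega) le_rfl, he, hlast]
    have := hinjt _ _ (by omega) (by omega) e1
    omega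
  · intro he
    have e1 : w.support.tail.getD (w.length - 1 - 1) a = w.support.tail.getD 0 a := by
      rw [← hgetD (w.length - 1) (by omega) (by omega),
        show (0:ℕ) = 1 - 1 from rfl, ← hgetD 1 (by omega) (by omega), he]
    have := hinjt _ _ (by omega) (by omega) e1
    omega

lemma cycle_seq_facts (hw : w.IsCycle) {n : ℕ} (hn : w.length = n + 1) :
    (fun i : Fin (n+2) => w.getVert i.val) 0
        = (fun i : Fin (n+2) => w.getVert i.val) (Fin.last (n+1))
    ∧ (∀ i : Fin (n+1), G.Adj ((fun i : Fin (n+2) => w.getVert i.val) i.castSucc)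
        ((fun i : Fin (n+2) => w.getVert i.val) i.succ))
    ∧ ∑ i : Fin (n+1), phiZ a (w.getVert 1)
        ((fun i : Fin (n+2) => w.getVert i.val) i.castSucc)
        ((fun i : Fin (n+2) => w.getVert i.val) i.succ) = 1 := by
  have hg3 : 3 ≤ w.length := hw.three_le_length
  obtain ⟨hA1, hA2⟩ := cycle_getVert_ne w hw
  have hv0 : w.getVert 0 = a := w.getVert_zero
  have hvl : w.getVert (n+1) = a := by rw [← hn]; exact w.getVert_length
  refine ⟨?_, ?_, ?_⟩
  · simp only [Fin.val_zero, Fin.val_last, hv0, hvl]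
  · intro i
    simp only [Fin.coe_castSucc, Fin.val_succ]
    exact w.adj_getVert_succ (by omega)
  · rw [Finset.sum_eq_single_of_mem (0 : Fin (n+1)) (Finset.mem_univ _)]
    · simp only [Fin.castSucc_zero, Fin.succ_zero_eq_one, Fin.val_zero, Fin.val_one, hv0]
      unfold phiZ
      rw [if_pos ⟨rfl, rfl⟩]
    · intro i _ hi0
      have hi1 : 1 ≤ i.val := by
        rcases Nat.eq_zero_or_pos i.val with h | h
        · exact absurd (Fin.ext h) hi0
        · omega
      simp only [Fin.coe_castSucc, Fin.val_succ]
      unfold phiZ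
      rw [if_neg, if_neg]
      · rintro ⟨h1, h2⟩
        -- getVert (i+1) = a with 2 ≤ i+1 ≤ n+1
        by_cases hilast : i.val + 1 = w.length
        · -- getVert i = y and i = length - 1
          have : w.getVert (w.length - 1) = w.getVert 1 := by
            rw [show w.length - 1 = i.val by omega, h1]
          exact hA2 this
        · exact hA1 (i.val + 1) (by omega) (by omega) h2
      · rintro ⟨h1, h2⟩
        exact hA1 i.val hi1 (by omega) h1


end CycleFacts

lemma mag_zero (L : Matrix V V ℝ) :
    magneticMatrix L (fun _ _ => 0) = Matrix.of fun u v => ((L u v : ℝ) : ℂ) := by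
  ext u v
  unfold magneticMatrix
  simp only [Matrix.of_apply]
  split <;> simp

lemma pp_cast (L' : Matrix V V ℝ) {n : ℕ} (f : Fin (n+1) → V) :
    pp (Matrix.of fun u v => ((L' u v : ℝ) : ℂ)) f = ((pp L' f : ℝ) : ℂ) := by
  unfold pp
  rw [Complex.ofReal_prod]
  rfl

lemma sign_prod {m : ℕ} (ℒ : Fin m → ℝ) (h : ∀ i, ℒ i < 0) :
    0 < (-1:ℝ)^m * ∏ i, ℒ i := by
  have h1 : ∏ i : Fin m, ℒ i = ∏ i : Fin m, ((-1:ℝ) * (-ℒ i)) :=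
    Finset.prod_congr rfl fun i _ => by ring
  have h2 : (0:ℝ) < ∏ i : Fin m, (-ℒ i) :=
    Finset.prod_pos (fun i _ => by linarith [h i])
  rw [h1, Finset.prod_mul_distrib, Finset.prod_const, Finset.card_univ, Fintype.card_fin,
    ← mul_assoc, ← mul_pow]
  norm_num
  exact h2

/-- Part 2: at the girth, the trace differs between `Axy` and the zero potential. -/
lemma trace_mag_ne (G : SimpleGraph V) (hcyc : ¬ G.IsAcyclic) (L : Matrix V V ℝ)
    (hneg : ∀ u v, G.Adj u v → L u v < 0)
    (hzero : ∀ u v, u ≠ v → ¬ G.Adj u v → L u v = 0) :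
    ∃ A B : V → V → ℝ, (∀ u v, A u v = - A v u) ∧ (∀ u v, B u v = - B v u) ∧
      ((magneticMatrix L A) ^ G.girth).trace ≠ ((magneticMatrix L B) ^ G.girth).trace := by
  obtain ⟨a, w, hw, hglen⟩ := exists_girth_eq_length.mpr hcyc
  have hg3 : 3 ≤ G.girth := three_le_girth hcyc
  obtain ⟨N, hN⟩ : ∃ N, G.girth = N + 1 := ⟨G.girth - 1, by omega⟩
  have hwlen : w.length = N + 1 := by omega
  set y := w.getVert 1 with hy
  have hadj0 : G.Adj a y := by
    have := w.adj_getVert_succ (i := 0) (by omega)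
    rwa [w.getVert_zero] at this
  have hxy : a ≠ y := hadj0.ne
  obtain ⟨hcfcl, hcfadj, hcfsum⟩ := cycle_seq_facts w hw hwlen
  refine ⟨Axy a y, fun _ _ => 0, Axy_antisym hxy, fun _ _ => by ring, ?_⟩
  rw [hN]
  rw [mag_Axy L hxy, mag_zero L, trace_pow, trace_pow]
  have e1 : ∀ f : Fin (N+2) → V,
      (if f 0 = f (Fin.last (N+1)) then pp (Matrix.of fun u v => ((Lxy L a y u v : ℝ) : ℂ)) f else 0)
      = (((if f 0 = f (Fin.last (N+1)) then pp (Lxy L a y) f else 0 : ℝ)) : ℂ) := by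
    intro f
    rw [pp_cast, apply_ite (fun r : ℝ => (r : ℂ))]
    simp
  have e2 : ∀ f : Fin (N+2) → V,
      (if f 0 = f (Fin.last (N+1)) then pp (Matrix.of fun u v => ((L u v : ℝ) : ℂ)) f else 0)
      = (((if f 0 = f (Fin.last (N+1)) then pp L f else 0 : ℝ)) : ℂ) := by
    intro f
    rw [pp_cast, apply_ite (fun r : ℝ => (r : ℂ))]
    simp
  rw [Finset.sum_congr rfl (fun f _ => e1 f), Finset.sum_congr rfl (fun f _ => e2 f),
    ← Complex.ofReal_sum, ← Complex.ofReal_sum]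
  rw [Ne, Complex.ofReal_inj]
  have hT : 0 < ∑ f : Fin (N+2) → V,
      (if f 0 = f (Fin.last (N+1)) then (-1:ℝ)^(N+1) * (pp L f - pp (Lxy L a y) f) else 0) := by
    apply Finset.sum_pos'
    · -- nonnegativity
      intro f _
      by_cases hcl : f 0 = f (Fin.last (N+1))
      · rw [if_pos hcl]
        rw [pp_Lxy L hxy f]
        rcases Int.even_or_odd (∑ i : Fin (N+1), phiZ a y (f i.castSucc) (f i.succ)) with he | ho
        · rw [he.neg_one_zpow]
          simp
        · rw [ho.neg_one_zpow]
          by_cases hall : ∀ i : Fin (N+1), f i.succ = f i.castSucc ∨ G.Adj (f i.castSucc) (f i.succ)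
          · -- no stationary step, else S f = 0 (even), contradiction
            have hnostat : ∀ i : Fin (N+1), G.Adj (f i.castSucc) (f i.succ) := by
              intro i
              rcases hall i with hstat | h
              · exfalso
                have hcount : ecount (extSeq f) (N+1) < G.girth := by
                  have := ecount_lt (extSeq f) (N+1) (i₀ := i.val) (by omega)
                    (by rw [extSeq_succ, extSeq_castSucc, hstat])
                  omega
                have hz := balance_fin G (phiZ a y) (phiZ_antisym hxy) (phiZ_diag hxy)
                  f hcl hall hcount
                rw [hz] at ho
                simp at ho
              · exact h
            have hsign := sign_prod (fun i : Fin (N+1) => L (f i.castSucc) (f i.succ))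
              (fun i => hneg _ _ (hnostat i))
            have hppL : pp L f = ∏ i : Fin (N+1), L (f i.castSucc) (f i.succ) := rfl
            rw [hppL]
            nlinarith [hsign]
          · push_neg at hall
            obtain ⟨i, hne, hnadj⟩ := hall
            have hLz : L (f i.castSucc) (f i.succ) = 0 := hzero _ _ (fun h => hne h.symm) hnadj
            have h1 : pp L f = 0 := Finset.prod_eq_zero (Finset.mem_univ i) hLz
            rw [h1]
            simp
      · rw [if_neg hcl]
    · -- positivity at the cycle sequence
      refine ⟨fun i : Fin (N+2) => w.getVert i.val, Finset.mem_univ _, ?_⟩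
      rw [if_pos hcfcl]
      rw [pp_Lxy L hxy]
      rw [show (∑ i : Fin (N+1), phiZ a y
          (w.getVert ((i.castSucc : Fin (N+2)) : ℕ)) (w.getVert ((i.succ : Fin (N+2)) : ℕ))) = 1
        from by simpa using hcfsum, zpow_one]
      have hsign := sign_prod
        (fun i : Fin (N+1) => L ((fun i : Fin (N+2) => w.getVert i.val) i.castSucc)
          ((fun i : Fin (N+2) => w.getVert i.val) i.succ))
        (fun i => hneg _ _ (hcfadj i))
      have hppL : pp L (fun i : Fin (N+2) => w.getVert i.val)
          = ∏ i : Fin (N+1), L ((fun i : Fin (N+2) => w.getVert i.val) i.castSucc)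
            ((fun i : Fin (N+2) => w.getVert i.val) i.succ) := rfl
      rw [hppL]
      nlinarith [hsign]
  intro heq
  rw [show (∑ f : Fin (N+2) → V,
      (if f 0 = f (Fin.last (N+1)) then (-1:ℝ)^(N+1) * (pp L f - pp (Lxy L a y) f) else 0))
    = (-1:ℝ)^(N+1) * ((∑ f : Fin (N+2) → V, (if f 0 = f (Fin.last (N+1)) then pp L f else 0))
        - ∑ f : Fin (N+2) → V, (if f 0 = f (Fin.last (N+1)) then pp (Lxy L a y) f else 0)) from by
      rw [← Finset.sum_sub_distrib, Finset.mul_sum]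
      refine Finset.sum_congr rfl fun f _ => ?_
      by_cases hcl : f 0 = f (Fin.last (N+1)) <;> simp [hcl]] at hT
  rw [← heq] at hT
  simp at hT




end MagAux

/-- For a finite connected simple graph containing at least one cycle
and a discrete Schrödinger operator `L` on it, the girth of `G` is the least `k ≥ 1`
for which the function `A ↦ trace(L(A)^k)` on magnetic potentials is not constant. -/
theorem girth_eq_least_k_with_nonconstant_trace
    {V : Type*} [Fintype V] [DecidableEq V]
    (G : SimpleGraph V) (hconn : G.Connected) (hcyc : ¬ G.IsAcyclic)
    (L : Matrix V V ℝ) (hsym : L.IsSymm)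
    (hneg : ∀ u v, G.Adj u v → L u v < 0)
    (hzero : ∀ u v, u ≠ v → ¬ G.Adj u v → L u v = 0) :
    IsLeast {k : ℕ | 1 ≤ k ∧
        ¬ ∀ A B : V → V → ℝ, (∀ u v, A u v = - A v u) → (∀ u v, B u v = - B v u) →
            ((magneticMatrix L A) ^ k).trace = ((magneticMatrix L B) ^ k).trace}
      G.girth := by
  have hg3 : 3 ≤ G.girth := SimpleGraph.three_le_girth hcyc
  constructor
  · refine ⟨by omega, ?_⟩
    intro hcon
    obtain ⟨A, B, hA, hB, hne⟩ := MagAux.trace_mag_ne G hcyc L hneg hzero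
    exact hne (hcon A B hA hB)
  · rintro k ⟨hk1, hknc⟩
    by_contra hlt
    push_neg at hlt
    obtain ⟨n, rfl⟩ : ∃ n, k = n + 1 := ⟨k - 1, by omega⟩
    apply hknc
    intro A B hA hB
    rw [MagAux.trace_mag_eq_of_short G L hzero A hA (by omega),
      MagAux.trace_mag_eq_of_short G L hzero B hB (by omega)]
end
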